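/- Let Ū = (ū, v̄, w̄) ∈ ℝ³ with |2v̄+s| < 4, and define Ŝ₂[s,Ū] := (ū,w̄) + E(v̄,s)·(ū,w̄) where E(v̄,s) = (4s/((2v̄+s)²-16))·[[s+4-2v̄, 4],[(s+4)(s-2)+4v̄, 3s-4+2v̄]]. Then the state U' with first and third components Ŝ₂[s,Ū] and second component v̄+s satisfies the Rankine–Hugoniot conditions γ(U' - Ū) = F₀(U') - F₀(Ū) with shock speed γ = 2v̄+s, where F₀(u,v,w) = (4((v-1)u - w), v², 4(v(v-2)u - (v-1)w)). -/
import Mathlib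


/-- The Baiti–Jenssen flux at `η = 0`. -/
noncomputable def F0 : ℝ × ℝ × ℝ → ℝ × ℝ × ℝ := fun p =>
  (4 * ((p.2.1 - 1) * p.1 - p.2.2), p.2.1 ^ 2,
    4 * (p.2.1 * (p.2.1 - 2) * p.1 - (p.2.1 - 1) * p.2.2))

noncomputable def Emat (v s : ℝ) : Matrix (Fin 2) (Fin 2) ℝ :=
  (4 * s / ((2 * v + s) ^ 2 - 16)) •
    !![s + 4 - 2 * v, 4; (s + 4) * (s - 2) + 4 * v, 3 * s - 4 + 2 * v]

theorem stmt4 (u v w s : ℝ) (h : |2 * v + s| < 4) :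
    let x : Fin 2 → ℝ := ![u, w]
    let y : Fin 2 → ℝ := x + (Emat v s).mulVec x
    let U : ℝ × ℝ × ℝ := (u, v, w)
    let U' : ℝ × ℝ × ℝ := (y 0, v + s, y 1)
    (2 * v + s) • (U' - U) = F0 U' - F0 U := by
  intro x y U U' 
  have hd : (2 * v + s) ^ 2 - 16 ≠ 0 := by
    have := abs_lt.mp h; nlinarith [this.1, this.2]
  have hy0 : y 0 = u + (4 * s / ((2 * v + s) ^ 2 - 16)) * ((s + 4 - 2 * v) * u + 4 * w) := by
    simp [y, x, Emat, Matrix.mulVec, dotProduct, Fin.sum_univ_two,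
      Matrix.vecHead, Matrix.vecTail]
    ring
  have hy1 : y 1 = w + (4 * s / ((2 * v + s) ^ 2 - 16)) * (((s + 4) * (s - 2) + 4 * v) * u + (3 * s - 4 + 2 * v) * w) := by
    simp [y, x, Emat, Matrix.mulVec, dotProduct, Fin.sum_univ_two,
      Matrix.vecHead, Matrix.vecTail]
    ring
  show (2 * v + s) • ((y 0, v + s, y 1) - (u, v, w)) = F0 (y 0, v + s, y 1) - F0 (u, v, w)
  rw [hy0, hy1]
  simp only [F0, Prod.smul_def, Prod.mk_sub_mk, smul_eq_mul]
  refine Prod.ext ?_ (Prod.ext ?_ ?_)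
  · field_simp; ring
  · simp only; ring
  · field_simp; ring
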